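/- arXiv:2301.02751 — 3 statements merged into one kernel-verified Lean document; each statement's English description precedes it below -/
import Mathlib

section
/- Let {X0, X1, X2, X3} be a difference family in Z/v with parameters (v; k0, k1, k2, k3; λ) satisfying λ = k0 + k1 + k2 + k3 − v. Let A_i be the v×v circulant ±1 matrices whose first row has entry −1 at positions in X_i and +1 elsewhere. Then A0·A0ᵀ + A1·A1ᵀ + A2·A2ᵀ + A3·A3ᵀ = 4v·I. -/
open Matrix

def diffCount {v : ℕ} (X : Finset (ZMod v)) (d : ZMod v) : ℕ :=
  ((X ×ˢ X).filter fun p => p.1 - p.2 = d).card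

def circOf {v : ℕ} (X : Finset (ZMod v)) : Matrix (ZMod v) (ZMod v) ℝ :=
  fun i j => if j - i ∈ X then -1 else 1

lemma count_shift {v : ℕ} [NeZero v] (X : Finset (ZMod v)) (i : ZMod v) :
    (Finset.univ.filter fun t : ZMod v => t - i ∈ X).card = X.card := by
  have : (Finset.univ.filter fun t : ZMod v => t - i ∈ X) = X.image (· + i) := by
    ext t
    simp only [Finset.mem_filter, Finset.mem_univ, true_and, Finset.mem_image]
    constructor
    · intro h; exact ⟨t - i, h, by ring⟩
    · rintro ⟨x, hx, rfl⟩; simpa using hx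
  rw [this, Finset.card_image_of_injective _ (add_left_injective i)]

lemma count_pair {v : ℕ} [NeZero v] (X : Finset (ZMod v)) (i j : ZMod v) :
    (Finset.univ.filter fun t : ZMod v => t - i ∈ X ∧ t - j ∈ X).card
      = diffCount X (j - i) := by
  unfold diffCount
  apply Finset.card_bij' (fun t _ => (t - i, t - j)) (fun p _ => p.1 + i)
  · intro t ht
    simp only [Finset.mem_filter, Finset.mem_univ, true_and] at ht
    simp only [Finset.mem_filter, Finset.mem_product]
    exact ⟨⟨ht.1, ht.2⟩, by ring⟩
  · intro p hp
    simp only [Finset.mem_filter, Finset.mem_product] at hp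
    simp only [Finset.mem_filter, Finset.mem_univ, true_and]
    constructor
    · simpa using hp.1.1
    · have e : p.1 + i - j = p.2 := by linear_combination hp.2
      rw [e]; exact hp.1.2
  · intro t _; ring
  · intro p hp
    simp only [Finset.mem_filter, Finset.mem_product] at hp
    have h := hp.2
    ext
    · simp
    · show p.1 + i - j = p.2
      linear_combination h

lemma diffCount_zero {v : ℕ} (X : Finset (ZMod v)) :
    diffCount X 0 = X.card := by
  unfold diffCount
  have : ((X ×ˢ X).filter fun p => p.1 - p.2 = 0) = X.diag := by
    ext p
    simp only [Finset.mem_filter, Finset.mem_product, Finset.mem_diag, sub_eq_zero]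
    constructor
    · rintro ⟨⟨h1, _⟩, h3⟩; exact ⟨h1, h3⟩
    · rintro ⟨h1, h2⟩; exact ⟨⟨h1, h2 ▸ h1⟩, h2⟩
  rw [this, Finset.diag_card]

lemma entry_eq {v : ℕ} [NeZero v] (X : Finset (ZMod v)) (i j : ZMod v) :
    (circOf X * (circOf X)ᵀ) i j
      = (v : ℝ) - 4 * X.card + 4 * diffCount X (j - i) := by
  rw [Matrix.mul_apply]
  have h : ∀ t : ZMod v, circOf X i t * (circOf X)ᵀ t j =
      1 - 2 * (if t - i ∈ X then (1:ℝ) else 0) - 2 * (if t - j ∈ X then (1:ℝ) else 0)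
        + 4 * (if t - i ∈ X ∧ t - j ∈ X then (1:ℝ) else 0) := by
    intro t
    simp only [Matrix.transpose_apply, circOf]
    by_cases h1 : t - i ∈ X <;> by_cases h2 : t - j ∈ X <;>
      simp [h1, h2] <;> ring
  rw [Finset.sum_congr rfl fun t _ => h t]
  rw [Finset.sum_add_distrib, Finset.sum_sub_distrib, Finset.sum_sub_distrib,
    ← Finset.mul_sum, ← Finset.mul_sum, ← Finset.mul_sum,
    Finset.sum_boole, Finset.sum_boole, Finset.sum_boole]
  rw [count_shift X i, count_shift X j, count_pair X i j]
  simp [Finset.card_univ, ZMod.card]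
  ring

theorem stmt7 {v k0 k1 k2 k3 lam : ℕ} [NeZero v]
    (X0 X1 X2 X3 : Finset (ZMod v))
    (h0 : X0.card = k0) (h1 : X1.card = k1) (h2 : X2.card = k2) (h3 : X3.card = k3)
    (hA : ∀ d : ZMod v, d ≠ 0 →
      diffCount X0 d + diffCount X1 d + diffCount X2 d + diffCount X3 d = lam)
    (hlam : (lam : ℤ) = (k0 : ℤ) + k1 + k2 + k3 - v) :
    circOf X0 * (circOf X0)ᵀ + circOf X1 * (circOf X1)ᵀ +
      circOf X2 * (circOf X2)ᵀ + circOf X3 * (circOf X3)ᵀ =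
      ((4 * v : ℝ)) • (1 : Matrix (ZMod v) (ZMod v) ℝ) := by
  ext i j
  simp only [Matrix.add_apply, Matrix.smul_apply, Matrix.one_apply, smul_eq_mul]
  rw [entry_eq, entry_eq, entry_eq, entry_eq, h0, h1, h2, h3]
  by_cases hij : i = j
  · subst hij
    simp only [sub_self, diffCount_zero, h0, h1, h2, h3, if_true, eq_self_iff_true]
    ring
  · rw [if_neg hij]
    have hd : j - i ≠ 0 := sub_ne_zero.mpr (fun h => hij h.symm)
    have hsum := hA (j - i) hd
    have hcast : (diffCount X0 (j - i) : ℝ) + diffCount X1 (j - i)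
        + diffCount X2 (j - i) + diffCount X3 (j - i) = lam := by
      exact_mod_cast congrArg (fun n : ℕ => (n : ℝ)) hsum
    have hlamR : (lam : ℝ) = (k0 : ℝ) + k1 + k2 + k3 - v := by
      exact_mod_cast hlam
    nlinarith [hcast, hlamR]
end

section
/- Let A0, A1, A2, A3 be v×v circulant matrices with A1 = A2, A0 symmetric, A3 symmetric, and let R be the v×v back-diagonal identity matrix. Then the propus array P = [[−A0, A1R, A2R, A3R], [A2R, RA3, A0, −RA1], [A1R, A0, −RA3, RA2], [A3R, −RA2, RA1, A0]] is a symmetric matrix. -/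
open Matrix

def backDiag (v : ℕ) [NeZero v] : Matrix (ZMod v) (ZMod v) ℝ :=
  fun i j => if i + j = 0 then 1 else 0

def IsCirculant {v : ℕ} (A : Matrix (ZMod v) (ZMod v) ℝ) : Prop :=
  ∃ a : ZMod v → ℝ, ∀ i j, A i j = a (j - i)

lemma mulR {v : ℕ} [NeZero v] (B : Matrix (ZMod v) (ZMod v) ℝ) (i j : ZMod v) :
    (B * backDiag v) i j = B i (-j) := by
  simp only [Matrix.mul_apply, backDiag]
  rw [Finset.sum_eq_single (-j)]
  · simp
  · intro k _ hk
    rw [if_neg, mul_zero]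
    intro h; apply hk; linear_combination h
  · simp

lemma Rmul {v : ℕ} [NeZero v] (B : Matrix (ZMod v) (ZMod v) ℝ) (i j : ZMod v) :
    (backDiag v * B) i j = B (-i) j := by
  simp only [Matrix.mul_apply, backDiag]
  rw [Finset.sum_eq_single (-i)]
  · simp
  · intro k _ hk
    rw [if_neg, zero_mul]
    intro h; apply hk; linear_combination h
  · simp

lemma mulR_symm {v : ℕ} [NeZero v] {B : Matrix (ZMod v) (ZMod v) ℝ}
    (hB : IsCirculant B) (i j : ZMod v) :
    (B * backDiag v) i j = (B * backDiag v) j i := by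
  obtain ⟨a, ha⟩ := hB
  rw [mulR, mulR, ha, ha]; ring_nf

lemma Rmul_symm {v : ℕ} [NeZero v] {B : Matrix (ZMod v) (ZMod v) ℝ}
    (hB : IsCirculant B) (i j : ZMod v) :
    (backDiag v * B) i j = (backDiag v * B) j i := by
  obtain ⟨a, ha⟩ := hB
  rw [Rmul, Rmul, ha, ha]; ring_nf

def propus {v : ℕ} [NeZero v] (A0 A1 A2 A3 : Matrix (ZMod v) (ZMod v) ℝ) :
    Matrix (Fin 4 × ZMod v) (Fin 4 × ZMod v) ℝ :=
  fun p q =>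
    (!![-A0, A1 * backDiag v, A2 * backDiag v, A3 * backDiag v;
        A2 * backDiag v, backDiag v * A3, A0, -(backDiag v * A1);
        A1 * backDiag v, A0, -(backDiag v * A3), backDiag v * A2;
        A3 * backDiag v, -(backDiag v * A2), backDiag v * A1, A0]) p.1 q.1 p.2 q.2

theorem stmt16 {v : ℕ} [NeZero v]
    (A0 A1 A2 A3 : Matrix (ZMod v) (ZMod v) ℝ)
    (hc0 : IsCirculant A0) (hc1 : IsCirculant A1)
    (hc2 : IsCirculant A2) (hc3 : IsCirculant A3)
    (h12 : A1 = A2) (h0s : A0ᵀ = A0) (h3s : A3ᵀ = A3) :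
    (propus A0 A1 A2 A3)ᵀ = propus A0 A1 A2 A3 := by
  have h0 : ∀ x y, A0 y x = A0 x y := fun x y => congrFun (congrFun h0s x) y
  ext ⟨i, x⟩ ⟨j, y⟩
  subst h12
  simp only [transpose_apply, propus]
  fin_cases i <;> fin_cases j <;>
    simp only [Fin.zero_eta, Fin.mk_one, Fin.reduceFinMk, Matrix.cons_val_zero,
      Matrix.cons_val_one, Matrix.head_cons, Matrix.cons_val_two, Matrix.tail_cons,
      Matrix.cons_val_three, Matrix.head_fin_const, Matrix.of_apply, Matrix.cons_val',
      Matrix.empty_val', Matrix.cons_val_fin_one, Matrix.neg_apply, neg_inj] <;>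
    first
      | exact h0 x y
      | rw [mulR_symm hc2] | rw [mulR_symm hc3] | rw [Rmul_symm hc2] | rw [Rmul_symm hc3]
      | rfl
end

section
/- If A0, A1, A2, A3 are v×v circulant ±1 matrices with A1 = A2, A0 and A3 symmetric, and A0A0ᵀ + A1A1ᵀ + A2A2ᵀ + A3A3ᵀ = 4vI, then the propus array P built from them is a symmetric Hadamard matrix of order 4v: P = Pᵀ and P·Pᵀ = 4v·I. -/
open Matrix

variable {v : ℕ} [NeZero v]

lemma mul_backDiag_apply (M : Matrix (ZMod v) (ZMod v) ℝ) (i j : ZMod v) :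
    (M * backDiag v) i j = M i (-j) := by
  rw [Matrix.mul_apply]
  simp only [backDiag, mul_ite, mul_one, mul_zero, add_eq_zero_iff_eq_neg]
  simp

lemma backDiag_mul_apply (M : Matrix (ZMod v) (ZMod v) ℝ) (i j : ZMod v) :
    (backDiag v * M) i j = M (-i) j := by
  rw [Matrix.mul_apply]
  simp only [backDiag, ite_mul, one_mul, zero_mul]
  have h : ∀ x : ZMod v, (i + x = 0) ↔ (x = -i) := by
    intro x; rw [add_comm, add_eq_zero_iff_eq_neg]
  simp only [h]
  simp

lemma backDiag_transpose : (backDiag v)ᵀ = backDiag v := by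
  ext i j; simp [backDiag, transpose_apply, add_comm]

lemma backDiag_mul_backDiag : backDiag v * backDiag v = 1 := by
  ext i j
  rw [mul_backDiag_apply]
  simp [backDiag, Matrix.one_apply, add_neg_eq_zero]

set_option linter.unusedSectionVars false in
lemma circ_t {X : Matrix (ZMod v) (ZMod v) ℝ} (h : IsCirculant X) : IsCirculant Xᵀ := by
  obtain ⟨a, ha⟩ := h
  exact ⟨fun d => a (-d), fun i j => by rw [transpose_apply, ha]; congr 1; ring⟩

set_option linter.unusedSectionVars false in
lemma circ_eq {X : Matrix (ZMod v) (ZMod v) ℝ} (h : IsCirculant X) :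
    ∃ b, X = Matrix.circulant b := by
  obtain ⟨a, ha⟩ := h
  exact ⟨fun d => a (-d), by ext i j; rw [Matrix.circulant_apply, ha]; congr 1; ring⟩

lemma circ_comm {X Y : Matrix (ZMod v) (ZMod v) ℝ} (hX : IsCirculant X) (hY : IsCirculant Y) :
    X * Y = Y * X := by
  obtain ⟨x, hx⟩ := circ_eq hX
  obtain ⟨y, hy⟩ := circ_eq hY
  rw [hx, hy, Matrix.circulant_mul_comm]

lemma backDiag_mul_circ {X : Matrix (ZMod v) (ZMod v) ℝ} (h : IsCirculant X) :
    backDiag v * X = Xᵀ * backDiag v := by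
  obtain ⟨a, ha⟩ := h
  ext i j
  rw [backDiag_mul_apply, mul_backDiag_apply, transpose_apply, ha, ha]
  congr 1
  ring

lemma shift_lemma (W : Matrix (ZMod v) (ZMod v) ℝ) {X : Matrix (ZMod v) (ZMod v) ℝ}
    (h : IsCirculant X) : W * backDiag v * X = W * Xᵀ * backDiag v := by
  rw [mul_assoc, backDiag_mul_circ h, ← mul_assoc]

lemma rr_lemma (W : Matrix (ZMod v) (ZMod v) ℝ) : W * backDiag v * backDiag v = W := by
  rw [mul_assoc, backDiag_mul_backDiag, mul_one]

def propusBlocks {v : ℕ} [NeZero v] (A0 A1 A2 A3 : Matrix (ZMod v) (ZMod v) ℝ) :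
    Matrix (Fin 4) (Fin 4) (Matrix (ZMod v) (ZMod v) ℝ) :=
  !![-A0, A1 * backDiag v, A2 * backDiag v, A3 * backDiag v;
     A2 * backDiag v, backDiag v * A3, A0, -(backDiag v * A1);
     A1 * backDiag v, A0, -(backDiag v * A3), backDiag v * A2;
     A3 * backDiag v, -(backDiag v * A2), backDiag v * A1, A0]

lemma propus_eq (A0 A1 A2 A3 : Matrix (ZMod v) (ZMod v) ℝ) :
    propus A0 A1 A2 A3 =
      Matrix.compRingEquiv (Fin 4) (ZMod v) ℝ (propusBlocks A0 A1 A2 A3) := rfl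

lemma comp_smul_one (c : ℝ) :
    Matrix.compRingEquiv (Fin 4) (ZMod v) ℝ
      (c • (1 : Matrix (Fin 4) (Fin 4) (Matrix (ZMod v) (ZMod v) ℝ))) =
      c • (1 : Matrix (Fin 4 × ZMod v) (Fin 4 × ZMod v) ℝ) := by
  ext ⟨k,i⟩ ⟨l,j⟩
  simp [Matrix.compRingEquiv_apply, Matrix.smul_apply, Matrix.one_apply, Prod.ext_iff]
  split_ifs <;> simp_all [Matrix.one_apply]

set_option maxHeartbeats 2000000 in
theorem stmt17 {v : ℕ} [NeZero v]
    (A0 A1 A2 A3 : Matrix (ZMod v) (ZMod v) ℝ)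
    (hc0 : IsCirculant A0) (hc1 : IsCirculant A1)
    (hc2 : IsCirculant A2) (hc3 : IsCirculant A3)
    (hpm : ∀ k : Fin 4, ∀ i j, (![A0, A1, A2, A3] k) i j = 1 ∨ (![A0, A1, A2, A3] k) i j = -1)
    (h12 : A1 = A2) (h0s : A0ᵀ = A0) (h3s : A3ᵀ = A3)
    (hsum : A0 * A0ᵀ + A1 * A1ᵀ + A2 * A2ᵀ + A3 * A3ᵀ =
      ((4 * v : ℝ)) • (1 : Matrix (ZMod v) (ZMod v) ℝ)) :
    (∀ p q, propus A0 A1 A2 A3 p q = 1 ∨ propus A0 A1 A2 A3 p q = -1) ∧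
    (propus A0 A1 A2 A3)ᵀ = propus A0 A1 A2 A3 ∧
    propus A0 A1 A2 A3 * (propus A0 A1 A2 A3)ᵀ =
      ((4 * v : ℝ)) • (1 : Matrix (Fin 4 × ZMod v) (Fin 4 × ZMod v) ℝ) := by
  have h0 : ∀ i j, A0 i j = 1 ∨ A0 i j = -1 := fun i j => by simpa using hpm 0 i j
  have h1 : ∀ i j, A1 i j = 1 ∨ A1 i j = -1 := fun i j => by simpa using hpm 1 i j
  have h2 : ∀ i j, A2 i j = 1 ∨ A2 i j = -1 := fun i j => by simpa using hpm 2 i j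
  have h3 : ∀ i j, A3 i j = 1 ∨ A3 i j = -1 := fun i j => by simpa using hpm 3 i j
  have hR2 : backDiag v * A2 = A2ᵀ * backDiag v := backDiag_mul_circ hc2
  have hR3 : backDiag v * A3 = A3 * backDiag v := by rw [backDiag_mul_circ hc3, h3s]
  have hT2 : backDiag v * A2ᵀ = A2 * backDiag v := by
    rw [backDiag_mul_circ (circ_t hc2), transpose_transpose]
  have s0 : ∀ W, W * backDiag v * A0 = W * A0 * backDiag v := fun W => by
    rw [shift_lemma W hc0, h0s]
  have s2 : ∀ W, W * backDiag v * A2 = W * A2ᵀ * backDiag v := fun W => shift_lemma W hc2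
  have s2t : ∀ W, W * backDiag v * A2ᵀ = W * A2 * backDiag v := fun W => by
    rw [shift_lemma W (circ_t hc2), transpose_transpose]
  have s3 : ∀ W, W * backDiag v * A3 = W * A3 * backDiag v := fun W => by
    rw [shift_lemma W hc3, h3s]
  have m20 : A2 * A0 = A0 * A2 := circ_comm hc2 hc0
  have m30 : A3 * A0 = A0 * A3 := circ_comm hc3 hc0
  have m2t0 : A2ᵀ * A0 = A0 * A2ᵀ := circ_comm (circ_t hc2) hc0
  have m32 : A3 * A2 = A2 * A3 := circ_comm hc3 hc2
  have m32t : A3 * A2ᵀ = A2ᵀ * A3 := circ_comm hc3 (circ_t hc2)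
  have m2t2 : A2ᵀ * A2 = A2 * A2ᵀ := circ_comm (circ_t hc2) hc2
  have hsum' : A0 * A0 + A2 * A2ᵀ + A2 * A2ᵀ + A3 * A3 = (4 * v : ℝ) • 1 := by
    rw [h12, h0s, h3s] at hsum; exact hsum
  have hsymB : ∀ k l, ((propusBlocks A0 A1 A2 A3) l k)ᵀ = (propusBlocks A0 A1 A2 A3) k l := by
    intro k l
    fin_cases k <;> fin_cases l <;>
      simp [propusBlocks, transpose_neg, transpose_mul, backDiag_transpose,
        h0s, h3s, h12, hT2, hR2, hR3]
  have hsym : (propus A0 A1 A2 A3)ᵀ = propus A0 A1 A2 A3 := by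
    ext ⟨k, i⟩ ⟨l, j⟩
    exact congrFun (congrFun (hsymB k l) i) j
  have hMM : propusBlocks A0 A1 A2 A3 * propusBlocks A0 A1 A2 A3 =
      (4 * v : ℝ) • (1 : Matrix (Fin 4) (Fin 4) (Matrix (ZMod v) (ZMod v) ℝ)) := by
    have hs : ∀ i j, (A0 * A0) i j + (A2 * A2ᵀ) i j + (A2 * A2ᵀ) i j + (A3 * A3) i j =
        if i = j then (4 * v : ℝ) else 0 := by
      intro i j
      have := congrFun (congrFun hsum' i) j
      simpa [Matrix.add_apply, Matrix.smul_apply, Matrix.one_apply, mul_ite] using this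
    ext k l
    rw [Matrix.mul_apply, Fin.sum_univ_four]
    fin_cases k <;> fin_cases l <;>
      simp [propusBlocks, Matrix.smul_apply, Matrix.one_apply,
        h12, neg_mul, mul_neg, hR2, hR3, hT2, ← mul_assoc,
        s0, s2, s2t, s3, rr_lemma, m20, m30, m2t0, m32, m32t, m2t2] <;>
      (rename_i i j; linear_combination hs i j)
  refine ⟨?_, hsym, ?_⟩
  · rintro ⟨k, i⟩ ⟨l, j⟩
    have hent : ∀ k l (i j : ZMod v), (propusBlocks A0 A1 A2 A3) k l i j = 1 ∨
        (propusBlocks A0 A1 A2 A3) k l i j = -1 := by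
      intro k l i j
      have negpm : ∀ x : ℝ, (x = 1 ∨ x = -1) → (-x = 1 ∨ -x = -1) := by
        rintro x (h | h) <;> simp [h]
      have negpm' : ∀ x : ℝ, (x = 1 ∨ x = -1) → (-x = 1 ∨ x = 1) := by
        rintro x (h | h) <;> simp [h]
      fin_cases k <;> fin_cases l <;>
        simp [propusBlocks, mul_backDiag_apply, backDiag_mul_apply] <;>
        first
          | exact h0 _ _
          | exact h1 _ _
          | exact h2 _ _
          | exact h3 _ _
          | exact negpm _ (h0 _ _)
          | exact negpm _ (h1 _ _)
          | exact negpm _ (h2 _ _)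
          | exact negpm _ (h3 _ _)
          | exact negpm' _ (h0 _ _)
          | exact negpm' _ (h1 _ _)
          | exact negpm' _ (h2 _ _)
          | exact negpm' _ (h3 _ _)
    exact hent k l i j
  · rw [hsym, propus_eq, ← _root_.map_mul, hMM, comp_smul_one]
end
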